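/- arXiv:1902.00714 — 3 statements merged into one kernel-verified Lean document; each statement's English description precedes it below -/
import Mathlib

section
/- In the setting where each coordinate of $v \in \{0,1\}^N$ independently equals $u_k$ with probability $p \ne 1/2$, for fixed $u, w \in \{0,1\}^N$: if $p > 1/2$ then $\Pr(\Gamma_{v\oplus u} < \Gamma_{v\oplus w}) \ge \max\{0,\, 1 - 2\exp(-\tfrac{(1-2p)^2\Gamma_{u\oplus w}}{8})\}$, where $\Gamma_{x\oplus y}$ denotes Hamming distance. -/
open MeasureTheory ProbabilityTheory Real

lemma exp_neg_le_quad {s : ℝ} (hs : 0 ≤ s) : Real.exp (-s) ≤ 1 - s + s ^ 2 / 2 := by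
  have hq : 1 + s + s ^ 2 / 2 ≤ Real.exp s := Real.quadratic_le_exp_of_nonneg hs
  have hpos : (0:ℝ) < 1 + s + s ^ 2 / 2 := by nlinarith
  have h1 : Real.exp (-s) * Real.exp s = 1 := by rw [← Real.exp_add]; simp
  nlinarith [Real.exp_pos (-s), sq_nonneg s, sq_nonneg (s^2),
    mul_le_mul_of_nonneg_left hq (Real.exp_pos (-s)).le]

lemma bool_ne_iff_eq {a b c : Bool} (h : b ≠ c) : (a ≠ c) ↔ (a = b) := by
  cases a <;> cases b <;> cases c <;> simp_all

lemma ham_lt_iff {N : ℕ} (u w v : Fin N → Bool) :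
    hammingDist v u < hammingDist v w ↔
      (hammingDist u w : ℝ) / 2 <
        ∑ k ∈ Finset.univ.filter (fun k => u k ≠ w k),
          (if v k = u k then (1:ℝ) else 0) := by
  classical
  set D : Finset (Fin N) := Finset.univ.filter (fun k => u k ≠ w k) with hD
  have hsum : ∑ k ∈ D, (if v k = u k then (1:ℝ) else 0)
      = ((D.filter fun k => v k = u k).card : ℝ) := by
    rw [Finset.sum_boole]
  have hDcard : hammingDist u w = D.card := rfl
  have hsplit : ∀ x : Fin N → Bool,
      hammingDist v x = (D.filter fun k => v k ≠ x k).card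
        + (Dᶜ.filter fun k => v k ≠ x k).card := by
    intro x
    have : (Finset.univ : Finset (Fin N)) = D ∪ Dᶜ := by
      simp [Finset.union_compl]
    show (Finset.univ.filter fun k => v k ≠ x k).card = _
    rw [this, Finset.filter_union, Finset.card_union_of_disjoint]
    exact Finset.disjoint_filter_filter disjoint_compl_right
  have hcompl_eq : (Dᶜ.filter fun k => v k ≠ u k) = (Dᶜ.filter fun k => v k ≠ w k) := by
    apply Finset.filter_congr
    intro k hk
    have : u k = w k := by
      simp [hD, Finset.mem_compl, Finset.mem_filter] at hk
      exact hk
    rw [this]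
  have hDeq : (D.filter fun k => v k ≠ w k) = (D.filter fun k => v k = u k) := by
    apply Finset.filter_congr
    intro k hk
    have huw : u k ≠ w k := by
      simp [hD, Finset.mem_filter] at hk; exact hk
    simp [bool_ne_iff_eq huw]
  have hpart : (D.filter fun k => v k = u k).card
      + (D.filter fun k => ¬ v k = u k).card = D.card :=
    Finset.card_filter_add_card_filter_not _
  rw [hsum, hsplit u, hsplit w, hcompl_eq, hDeq, hDcard]
  have h2 : (D.filter fun k => v k ≠ u k) = (D.filter fun k => ¬ v k = u k) := rfl
  rw [h2]
  constructor
  · intro h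
    have : D.card < 2 * (D.filter fun k => v k = u k).card := by omega
    have h3 : ((D.card : ℝ)) < 2 * ((D.filter fun k => v k = u k).card : ℝ) := by
      exact_mod_cast this
    linarith
  · intro h
    have : (D.card : ℝ) < 2 * ((D.filter fun k => v k = u k).card : ℝ) := by linarith
    have : D.card < 2 * (D.filter fun k => v k = u k).card := by exact_mod_cast this
    omega

/-- Corollary 1 of the paper: with coordinates of `V` independently matching `u` with
probability `p > 1/2`, the probability that `V` is strictly closer to `u` than to `w`
in Hamming distance is at least `max{0, 1 - 2 exp(-(1-2p)² Γ_{u⊕w} / 8)}`. -/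
theorem stmt6 {Ω : Type*} [MeasurableSpace Ω] (μP : Measure Ω) [IsProbabilityMeasure μP]
    (N : ℕ) (u w : Fin N → Bool) (p : ℝ) (hp : 1 / 2 < p) (hp1 : p ≤ 1)
    (V : Ω → Fin N → Bool)
    (hmeas : ∀ k, Measurable (fun ω => V ω k))
    (hindep : iIndepFun (fun k ω => V ω k) μP)
    (hmatch : ∀ k, (μP {ω | V ω k = u k}).toReal = p) :
    max 0 (1 - 2 * Real.exp (-((1 - 2 * p) ^ 2 * (hammingDist u w : ℝ)) / 8))
      ≤ (μP {ω | hammingDist (V ω) u < hammingDist (V ω) w}).toReal := by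
  classical
  have hp0 : (0:ℝ) < p := by linarith
  set d : ℕ := hammingDist u w with hd
  set D : Finset (Fin N) := Finset.univ.filter (fun k => u k ≠ w k) with hDdef
  have hDcard : D.card = d := rfl
  set s : ℝ := (p - 1/2) / p with hs_def
  have hs_pos : 0 < s := div_pos (by linarith) hp0
  set t : ℝ := -s with ht_def
  have ht_neg : t ≤ 0 := by simp [ht_def]; linarith
  set X : Fin N → Ω → ℝ := fun k ω => if V ω k = u k then 1 else 0 with hX
  -- measurability and independence
  have hgmeas : ∀ k, Measurable (fun b : Bool => if b = u k then (1:ℝ) else 0) :=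
    fun k => measurable_of_countable _
  have hXmeas : ∀ k, Measurable (X k) := fun k => (hgmeas k).comp (hmeas k)
  have hXindep : iIndepFun X μP :=
    hindep.comp (fun k b => if b = u k then (1:ℝ) else 0) hgmeas
  have hAmeas : ∀ k, MeasurableSet {ω | V ω k = u k} :=
    fun k => (hmeas k) (measurableSet_singleton (u k))
  -- mgf of each coordinate
  have hexp_eq : ∀ (k : Fin N) (r : ℝ), (fun ω => Real.exp (r * X k ω)) =
      fun ω => Set.indicator {ω' | V ω' k = u k} (fun _ => Real.exp r - 1) ω + 1 := by
    intro k r; funext ω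
    by_cases h : V ω k = u k
    · simp [hX, h, Set.indicator_of_mem, Set.mem_setOf_eq]
    · simp [hX, h, Set.indicator_of_notMem]
  have hint : ∀ (k : Fin N) (r : ℝ), Integrable (fun ω => Real.exp (r * X k ω)) μP := by
    intro k r; rw [hexp_eq k r]
    exact ((integrable_const _).indicator (hAmeas k)).add (integrable_const 1)
  have hmgf : ∀ (k : Fin N) (r : ℝ), mgf (X k) μP r = p * Real.exp r + (1 - p) := by
    intro k r
    unfold mgf
    rw [hexp_eq k r,
      integral_add ((integrable_const _).indicator (hAmeas k)) (integrable_const 1),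
      integral_indicator_const _ (hAmeas k), integral_const]
    simp [hmatch k]
    simp only [measureReal_def, hmatch k]
    ring
  -- Chernoff bound
  have h_int_sum : Integrable (fun ω => Real.exp (t * (∑ k ∈ D, X k) ω)) μP :=
    hXindep.integrable_exp_mul_sum hXmeas (fun k _ => hint k t)
  have hcher := measure_le_le_exp_mul_mgf (μ := μP) (X := ∑ k ∈ D, X k)
    ((d:ℝ)/2) ht_neg h_int_sum
  have hmgf_sum : mgf (∑ k ∈ D, X k) μP t = (p * Real.exp t + (1 - p)) ^ d := by
    rw [hXindep.mgf_sum hXmeas D]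
    rw [Finset.prod_congr rfl (fun k _ => hmgf k t), Finset.prod_const, hDcard]
  -- per-coordinate bound
  have hbase_nonneg : (0:ℝ) ≤ p * Real.exp t + (1 - p) := by
    nlinarith [Real.exp_pos t]
  have hkey : Real.exp (s/2) * (p * Real.exp t + (1 - p)) ≤
      Real.exp (-(1 - 2*p)^2/8) := by
    have h1 : Real.exp t ≤ 1 - s + s^2/2 := exp_neg_le_quad hs_pos.le
    have h2 : p * Real.exp t + (1 - p) ≤ 1 + (-(p*s) + p*s^2/2) := by nlinarith
    have h3 : (1 : ℝ) + (-(p*s) + p*s^2/2) ≤ Real.exp (-(p*s) + p*s^2/2) := by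
      linarith [Real.add_one_le_exp (-(p*s) + p*s^2/2)]
    have h4 : Real.exp (s/2) * (p * Real.exp t + (1-p)) ≤
        Real.exp (s/2 + (-(p*s) + p*s^2/2)) := by
      rw [Real.exp_add]
      exact mul_le_mul_of_nonneg_left (h2.trans h3) (Real.exp_pos _).le
    refine h4.trans (Real.exp_le_exp.mpr ?_)
    have hp0' : p ≠ 0 := ne_of_gt hp0
    have heq : s/2 + (-(p*s) + p*s^2/2)
        = -(1 - 2*p)^2/8 + (2*p - 1)^2 * (p - 1) / (8*p) := by
      rw [hs_def]; field_simp; ring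
    rw [heq]
    have hnonpos : (2*p - 1)^2 * (p - 1) / (8*p) ≤ 0 := by
      apply div_nonpos_of_nonpos_of_nonneg
      · nlinarith [sq_nonneg (2*p - 1)]
      · linarith
    linarith
  have hpow : Real.exp (-t * ((d:ℝ)/2)) * (p * Real.exp t + (1-p))^d ≤
      Real.exp (-((1 - 2*p)^2 * (d:ℝ))/8) := by
    have he1 : Real.exp (-t * ((d:ℝ)/2)) = (Real.exp (s/2))^d := by
      rw [← Real.exp_nat_mul]
      congr 1
      rw [ht_def]; ring
    rw [he1, ← mul_pow]
    calc (Real.exp (s/2) * (p*Real.exp t + (1-p)))^d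
        ≤ (Real.exp (-(1 - 2*p)^2/8))^d := by
          exact pow_le_pow_left₀ (mul_nonneg (Real.exp_pos _).le hbase_nonneg) hkey d
      _ = Real.exp (-((1 - 2*p)^2 * (d:ℝ))/8) := by
          rw [← Real.exp_nat_mul]; congr 1; ring
  -- rewrite the event
  have hset : {ω | hammingDist (V ω) u < hammingDist (V ω) w}
      = {ω | (d:ℝ)/2 < (∑ k ∈ D, X k) ω} := by
    ext ω
    rw [Set.mem_setOf_eq, Set.mem_setOf_eq, ham_lt_iff]
    simp [Finset.sum_apply, hX, hDdef, hd]
  have hmeasS : Measurable (∑ k ∈ D, X k) := by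
    have h6 := Finset.measurable_sum D (fun k (_ : k ∈ D) => hXmeas k)
    convert h6 using 1
    funext a
    simp [Finset.sum_apply]
  have hEmeas : MeasurableSet {ω | (d:ℝ)/2 < (∑ k ∈ D, X k) ω} :=
    measurableSet_lt measurable_const hmeasS
  have hcompl : {ω | (d:ℝ)/2 < (∑ k ∈ D, X k) ω}ᶜ = {ω | (∑ k ∈ D, X k) ω ≤ (d:ℝ)/2} := by
    ext ω; simp [not_lt]
  have hsplit : (μP {ω | (d:ℝ)/2 < (∑ k ∈ D, X k) ω}).toReal
      = 1 - (μP {ω | (∑ k ∈ D, X k) ω ≤ (d:ℝ)/2}).toReal := by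
    have h5 := measure_compl hEmeas (measure_ne_top μP _)
    rw [measure_univ, hcompl] at h5
    rw [h5, ENNReal.toReal_sub_of_le prob_le_one ENNReal.one_ne_top, ENNReal.toReal_one]
    ring
  rw [hset, hsplit]
  apply max_le
  · have := ENNReal.toReal_nonneg (a := μP {ω | (∑ k ∈ D, X k) ω ≤ (d:ℝ)/2})
    have hle := (μP {ω | (∑ k ∈ D, X k) ω ≤ (d:ℝ)/2}).toReal
    have : (μP {ω | (∑ k ∈ D, X k) ω ≤ (d:ℝ)/2}).toReal ≤ 1 := by
      exact ENNReal.toReal_le_of_le_ofReal one_pos.le (by simp [prob_le_one])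
    linarith
  · have hchain : (μP {ω | (∑ k ∈ D, X k) ω ≤ (d:ℝ)/2}).toReal
        ≤ 2 * Real.exp (-((1 - 2 * p) ^ 2 * (d : ℝ)) / 8) := by
      calc (μP {ω | (∑ k ∈ D, X k) ω ≤ (d:ℝ)/2}).toReal
          ≤ Real.exp (-t * ((d:ℝ)/2)) * mgf (∑ k ∈ D, X k) μP t := hcher
        _ = Real.exp (-t * ((d:ℝ)/2)) * (p * Real.exp t + (1-p))^d := by rw [hmgf_sum]
        _ ≤ Real.exp (-((1 - 2*p)^2 * (d:ℝ))/8) := hpow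
        _ ≤ 2 * Real.exp (-((1 - 2*p)^2 * (d:ℝ))/8) := by
            nlinarith [Real.exp_pos (-((1 - 2*p)^2 * (d:ℝ))/8)]
    linarith
end

section
/- Let $p > 1/2$, let $u, w_1, \dots, w_M \in \{0,1\}^N$ be fixed, and let $v \in \{0,1\}^N$ be random with independent coordinates, each equal to $u_k$ with probability $p$. If $\min_j \Gamma_{u\oplus w_j} \ge \frac{16\ln N + 8\ln(2M)}{(1-2p)^2}$, then $\Pr\left(\exists j,\ \Gamma_{v\oplus u} \ge \Gamma_{v\oplus w_j}\right) \le \frac{1}{N^2}$. -/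
open MeasureTheory ProbabilityTheory Real

lemma coord_bound {p : ℝ} (hp : 1 / 2 < p) (hp1 : p ≤ 1) :
    Real.exp ((p - 1 / 2) / p / 2) * (p * Real.exp (-((p - 1 / 2) / p)) + (1 - p))
      ≤ Real.exp (-(2 * p - 1) ^ 2 / 8) := by
  set s : ℝ := (p - 1 / 2) / p with hs_def
  have hp0 : (0:ℝ) < p := by linarith
  have hs0 : 0 ≤ s := div_nonneg (by linarith) hp0.le
  have h1 : p * Real.exp (-s) + (1 - p) ≤ 1 - p * s + p * s ^ 2 / 2 := by
    have := exp_neg_le_quad hs0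
    nlinarith
  have h2 : (1:ℝ) - p * s + p * s ^ 2 / 2 ≤ Real.exp (-(p * s) + p * s ^ 2 / 2) := by
    have := Real.add_one_le_exp (-(p * s) + p * s ^ 2 / 2)
    linarith
  have h3 : Real.exp (s / 2) * (p * Real.exp (-s) + (1 - p))
      ≤ Real.exp (s / 2) * Real.exp (-(p * s) + p * s ^ 2 / 2) := by
    have hpos : 0 < Real.exp (s / 2) := Real.exp_pos _
    nlinarith [h1.trans h2]
  refine h3.trans ?_
  rw [← Real.exp_add, Real.exp_le_exp]
  have hps : p * s = p - 1 / 2 := by rw [hs_def]; field_simp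
  have hps2 : p * s ^ 2 = (p - 1 / 2) ^ 2 / p := by
    rw [hs_def]; field_simp
  have key : s / 2 + (-(p * s) + p * s ^ 2 / 2) = -(p - 1/2) ^ 2 / (2 * p) := by
    rw [hps]
    have : s / 2 = (p - 1/2) / (2 * p) := by rw [hs_def]; ring
    rw [this]
    rw [hps2]
    field_simp
    ring
  rw [key]
  rw [div_le_div_iff₀ (by linarith) (by norm_num)]
  nlinarith [sq_nonneg (p - 1/2)]
example : True := trivial

lemma single_bound {Ω : Type*} [MeasurableSpace Ω] (μP : Measure Ω) [IsProbabilityMeasure μP]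
    {N : ℕ} (u wj : Fin N → Bool) (p : ℝ) (hp : 1 / 2 < p) (hp1 : p ≤ 1)
    (V : Ω → Fin N → Bool) (hmeas : ∀ k, Measurable (fun ω => V ω k))
    (hindep : iIndepFun (fun k ω => V ω k) μP)
    (hmatch : ∀ k, (μP {ω | V ω k = u k}).toReal = p) :
    (μP {ω | hammingDist (V ω) wj ≤ hammingDist (V ω) u}).toReal
      ≤ Real.exp (-(hammingDist u wj : ℝ) * (2 * p - 1) ^ 2 / 8) := by
  classical
  set S : Finset (Fin N) := Finset.univ.filter (fun k => u k ≠ wj k) with hS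
  have hdcard : hammingDist u wj = S.card := rfl
  set X : Fin N → Ω → ℝ := fun k ω => if V ω k = u k then 1 else 0 with hX
  set s : ℝ := (p - 1 / 2) / p with hs_def
  have hp0 : (0:ℝ) < p := by linarith
  have hs0 : 0 ≤ s := div_nonneg (by linarith) hp0.le
  set t : ℝ := -s with ht_def
  have ht : t ≤ 0 := by simp [ht_def, hs0]
  -- event inclusion
  have hsub : {ω | hammingDist (V ω) wj ≤ hammingDist (V ω) u}
      ⊆ {ω | (∑ k ∈ S, X k) ω ≤ (S.card : ℝ) / 2} := by
    intro ω hω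
    simp only [Set.mem_setOf_eq] at hω ⊢
    have e1 : (hammingDist (V ω) wj : ℝ) = ∑ k, (if V ω k ≠ wj k then (1:ℝ) else 0) := by
      rw [hammingDist, Finset.card_filter]
      push_cast
      rfl
    have e2 : (hammingDist (V ω) u : ℝ) = ∑ k, (if V ω k ≠ u k then (1:ℝ) else 0) := by
      rw [hammingDist, Finset.card_filter]
      push_cast
      rfl
    have hcast : (hammingDist (V ω) wj : ℝ) ≤ (hammingDist (V ω) u : ℝ) := by
      exact_mod_cast hω
    rw [e1, e2] at hcast
    have key : ∀ k, (if V ω k ≠ wj k then (1:ℝ) else 0) - (if V ω k ≠ u k then (1:ℝ) else 0)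
        = if u k ≠ wj k then 2 * X k ω - 1 else 0 := by
      intro k
      cases hu : u k <;> cases hw : wj k <;> cases hv : V ω k <;>
        norm_num [hX, hu, hw, hv]
    have hsum : ∑ k, ((if V ω k ≠ wj k then (1:ℝ) else 0) - (if V ω k ≠ u k then (1:ℝ) else 0))
        = ∑ k ∈ S, (2 * X k ω - 1) := by
      rw [Finset.sum_congr rfl (fun k _ => key k), hS, Finset.sum_filter]
    rw [Finset.sum_sub_distrib] at hsum
    have h2 : ∑ k ∈ S, (2 * X k ω - 1) = 2 * (∑ k ∈ S, X k ω) - S.card := by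
      rw [Finset.sum_sub_distrib, ← Finset.mul_sum]
      simp
    rw [Finset.sum_apply]
    have := hsum ▸ (sub_nonpos.mpr hcast)
    rw [h2] at this
    linarith
  -- measurability and independence of X
  have hA : ∀ k, MeasurableSet {ω | V ω k = u k} :=
    fun k => hmeas k (measurableSet_singleton (u k))
  have hXmeas : ∀ k, Measurable (X k) :=
    fun k => Measurable.ite (hA k) measurable_const measurable_const
  have hXindep : iIndepFun X μP := by
    have := hindep.comp (fun k (b : Bool) => if b = u k then (1:ℝ) else 0)
      (fun k => measurable_from_top)
    exact this
  -- representation of exp (t * X k)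
  have hXrep : ∀ k, (fun ω => Real.exp (t * X k ω))
      = fun ω => Set.indicator {ω | V ω k = u k} (fun _ => Real.exp t - 1) ω + 1 := by
    intro k
    funext ω
    by_cases h : V ω k = u k <;> simp [hX, h, Set.indicator]
  have h_int : ∀ k, Integrable (fun ω => Real.exp (t * X k ω)) μP := by
    intro k
    rw [hXrep k]
    exact ((integrable_const _).indicator (hA k)).add (integrable_const 1)
  have hmgf : ∀ k, mgf (X k) μP t = p * Real.exp t + (1 - p) := by
    intro k
    rw [mgf, hXrep k, integral_add ((integrable_const _).indicator (hA k)) (integrable_const 1),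
      integral_indicator_const _ (hA k), integral_const]
    simp only [smul_eq_mul, measure_univ, measureReal_def, ENNReal.toReal_one, hmatch k]
    ring
  -- Chernoff
  have h_intY : Integrable (fun ω => Real.exp (t * (∑ k ∈ S, X k) ω)) μP :=
    hXindep.integrable_exp_mul_sum hXmeas (fun k _ => h_int k)
  have chern := measure_le_le_exp_mul_mgf (μ := μP) (X := ∑ k ∈ S, X k)
    ((S.card : ℝ) / 2) ht h_intY
  have hmgfY : mgf (∑ k ∈ S, X k) μP t = (p * Real.exp t + (1 - p)) ^ S.card := by
    rw [hXindep.mgf_sum hXmeas S]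
    rw [Finset.prod_congr rfl (fun k _ => hmgf k), Finset.prod_const]
  have step1 : (μP {ω | hammingDist (V ω) wj ≤ hammingDist (V ω) u}).toReal
      ≤ (μP {ω | (∑ k ∈ S, X k) ω ≤ (S.card : ℝ) / 2}).toReal :=
    ENNReal.toReal_mono (measure_ne_top _ _) (measure_mono hsub)
  have step2 := step1.trans chern
  rw [hmgfY] at step2
  have base_eq : Real.exp (-t * ((S.card : ℝ) / 2)) * (p * Real.exp t + (1 - p)) ^ S.card
      = (Real.exp (s / 2) * (p * Real.exp (-s) + (1 - p))) ^ S.card := by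
    rw [mul_pow, ← Real.exp_nat_mul]
    rw [ht_def]
    ring_nf
  rw [base_eq] at step2
  have hbase_nonneg : 0 ≤ Real.exp (s / 2) * (p * Real.exp (-s) + (1 - p)) := by
    have : 0 ≤ p * Real.exp (-s) + (1 - p) := by
      have := Real.exp_pos (-s)
      nlinarith
    positivity
  have hbase_le : Real.exp (s / 2) * (p * Real.exp (-s) + (1 - p))
      ≤ Real.exp (-(2 * p - 1) ^ 2 / 8) := by
    have := coord_bound hp hp1
    simpa [hs_def] using this
  have step3 : (Real.exp (s / 2) * (p * Real.exp (-s) + (1 - p))) ^ S.card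
      ≤ Real.exp (-(2 * p - 1) ^ 2 / 8) ^ S.card :=
    pow_le_pow_left₀ hbase_nonneg hbase_le _
  have final : Real.exp (-(2 * p - 1) ^ 2 / 8) ^ S.card
      = Real.exp (-(hammingDist u wj : ℝ) * (2 * p - 1) ^ 2 / 8) := by
    rw [← Real.exp_nat_mul, hdcard]
    ring_nf
  linarith [step2.trans step3, final.le, final.ge]

/-- Union-bound step of Lemma 2: if every competitor `w j` is at Hamming distance at
least `(16 ln N + 8 ln(2M))/(1-2p)²` from `u`, then the probability that some competitor
is at least as close to the random vector `V` as `u` is at most `1/N²`. -/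
theorem stmt7 {Ω : Type*} [MeasurableSpace Ω] (μP : Measure Ω) [IsProbabilityMeasure μP]
    (N M : ℕ) (hM : 1 ≤ M) (u : Fin N → Bool) (w : Fin M → Fin N → Bool)
    (p : ℝ) (hp : 1 / 2 < p) (hp1 : p ≤ 1)
    (V : Ω → Fin N → Bool)
    (hmeas : ∀ k, Measurable (fun ω => V ω k))
    (hindep : iIndepFun (fun k ω => V ω k) μP)
    (hmatch : ∀ k, (μP {ω | V ω k = u k}).toReal = p)
    (hdist : ∀ j, (16 * Real.log N + 8 * Real.log (2 * M)) / (1 - 2 * p) ^ 2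
        ≤ (hammingDist u (w j) : ℝ)) :
    (μP {ω | ∃ j, hammingDist (V ω) (w j) ≤ hammingDist (V ω) u}).toReal
      ≤ 1 / (N : ℝ) ^ 2 := by
  classical
  have hq : (0:ℝ) < (2 * p - 1) ^ 2 := pow_pos (by linarith) 2
  have hsq : (1 - 2 * p) ^ 2 = (2 * p - 1) ^ 2 := by ring
  have hM0 : (0:ℝ) < 2 * M := by
    have : (1:ℝ) ≤ M := by exact_mod_cast hM
    linarith
  have hlog2M : 0 < Real.log (2 * M) := by
    apply Real.log_pos
    have : (1:ℝ) ≤ M := by exact_mod_cast hM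
    linarith
  -- rule out N = 0
  rcases Nat.eq_zero_or_pos N with hN0 | hNpos
  · exfalso
    subst hN0
    have hj := hdist ⟨0, hM⟩
    have hham : hammingDist u (w ⟨0, hM⟩) = 0 := by
      have : u = w ⟨0, hM⟩ := funext fun k => k.elim0
      simp [this]
    rw [hham, hsq] at hj
    simp only [Nat.cast_zero, Real.log_zero] at hj
    have hpos : 0 < (16 * 0 + 8 * Real.log (2 * M)) / (2 * p - 1) ^ 2 :=
      div_pos (by linarith) hq
    nlinarith [hj, hpos]
  have hNR : (0:ℝ) < N := by exact_mod_cast hNpos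
  -- union bound
  set A : Fin M → Set Ω := fun j => {ω | hammingDist (V ω) (w j) ≤ hammingDist (V ω) u} with hA
  have hset : {ω | ∃ j, hammingDist (V ω) (w j) ≤ hammingDist (V ω) u} = ⋃ j, A j :=
    Set.setOf_exists _
  have hle : μP (⋃ j, A j) ≤ ∑ j, μP (A j) :=
    (measure_iUnion_le _).trans_eq (tsum_fintype _)
  have hsum_ne_top : (∑ j, μP (A j)) ≠ ⊤ := by
    refine (ENNReal.sum_lt_top.mpr fun j _ => measure_lt_top _ _).ne
  have hstep1 : (μP {ω | ∃ j, hammingDist (V ω) (w j) ≤ hammingDist (V ω) u}).toReal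
      ≤ ∑ j, (μP (A j)).toReal := by
    rw [hset, ← ENNReal.toReal_sum (fun j _ => measure_ne_top _ _)]
    exact ENNReal.toReal_mono hsum_ne_top hle
  -- per-term bound
  have hterm : ∀ j, (μP (A j)).toReal ≤ ((N:ℝ) ^ 2 * (2 * M))⁻¹ := by
    intro j
    have h1 := single_bound μP u (w j) p hp hp1 V hmeas hindep hmatch
    have h2 : 16 * Real.log N + 8 * Real.log (2 * M)
        ≤ (hammingDist u (w j) : ℝ) * (2 * p - 1) ^ 2 := by
      have := hdist j
      rw [hsq, div_le_iff₀ hq] at this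
      linarith
    have h3 : Real.exp (-(hammingDist u (w j) : ℝ) * (2 * p - 1) ^ 2 / 8)
        ≤ Real.exp (-(16 * Real.log N + 8 * Real.log (2 * M)) / 8) := by
      apply Real.exp_le_exp.mpr
      linarith
    have h4 : Real.exp (-(16 * Real.log N + 8 * Real.log (2 * M)) / 8)
        = ((N:ℝ) ^ 2 * (2 * M))⁻¹ := by
      rw [show -(16 * Real.log N + 8 * Real.log (2 * M)) / 8
          = -(Real.log N + Real.log N + Real.log (2 * M)) by ring]
      rw [Real.exp_neg, Real.exp_add, Real.exp_add, Real.exp_log hNR, Real.exp_log hM0]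
      ring_nf
    exact h1.trans (h3.trans_eq h4)
  have hsum : ∑ j, (μP (A j)).toReal ≤ (M:ℝ) * ((N:ℝ) ^ 2 * (2 * M))⁻¹ := by
    calc ∑ j, (μP (A j)).toReal ≤ ∑ _j : Fin M, ((N:ℝ) ^ 2 * (2 * M))⁻¹ :=
          Finset.sum_le_sum fun j _ => hterm j
      _ = (M:ℝ) * ((N:ℝ) ^ 2 * (2 * M))⁻¹ := by
          rw [Finset.sum_const, Finset.card_univ, Fintype.card_fin, nsmul_eq_mul]
  have hfin : (M:ℝ) * ((N:ℝ) ^ 2 * (2 * M))⁻¹ ≤ 1 / (N:ℝ) ^ 2 := by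
    have hMR : (0:ℝ) < M := by linarith
    rw [mul_inv, ← mul_assoc]
    rw [show (M:ℝ) * ((N:ℝ) ^ 2)⁻¹ * ((2:ℝ) * M)⁻¹
        = (M:ℝ) / (2 * M) * ((N:ℝ) ^ 2)⁻¹ by ring]
    have : (M:ℝ) / (2 * M) = 1 / 2 := by field_simp
    rw [this]
    have h2 : (0:ℝ) < ((N:ℝ) ^ 2)⁻¹ := by positivity
    have h3 : (1:ℝ) / (N:ℝ) ^ 2 = ((N:ℝ) ^ 2)⁻¹ := one_div _
    rw [h3]
    linarith
  linarith [hstep1.trans (hsum.trans hfin)]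
end

section
/- Let $p \ne 1/2$, let $u, w_1,\dots,w_M \in \{0,1\}^N$, and let $v$ have independent coordinates matching $u$ with probability $p$. Then the probability that $u$ is among the $K$ points of $\{u, w_1,\dots,w_M\}$ (with $K = M' - M$ for total size $M'$) not dominated by any $w_j$ satisfies: $\Pr(\forall j,\ \Gamma_{v\oplus u} < \Gamma_{v\oplus w_j}\text{ if }p>1/2,\text{ resp. }>\text{ if }p<1/2) \ge \max\{0,\ 1 - 2M\exp(-\tfrac{(1-2p)^2\,\Gamma_{\min}}{8})\}$, where $\Gamma_{\min} = \min_j \Gamma_{u\oplus w_j}$. -/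
open MeasureTheory ProbabilityTheory Real
open Finset


lemma aux_exp_neg_le {x : ℝ} (hx : 0 ≤ x) : Real.exp (-x) ≤ 1 - x + x ^ 2 / 2 := by
  have h1 : 1 + x + x ^ 2 / 2 ≤ Real.exp x := Real.quadratic_le_exp_of_nonneg hx
  rw [← mul_le_mul_iff_left₀ (Real.exp_pos x), ← Real.exp_add, neg_add_cancel, Real.exp_zero]
  have h2 : (0:ℝ) ≤ 1 - x + x ^ 2 / 2 := by nlinarith [sq_nonneg (x - 1)]
  nlinarith [mul_le_mul_of_nonneg_left h1 h2, sq_nonneg (x ^ 2), pow_nonneg hx 4]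

lemma ham_ident {N : ℕ} (a u v : Fin N → Bool) (D : Finset (Fin N))
    (hD : ∀ k, k ∈ D ↔ u k ≠ v k) :
    hammingDist a u + (∑ k ∈ D, if a k = u k then 1 else 0)
      = hammingDist a v + (∑ k ∈ D, if a k = u k then 0 else 1) := by
  classical
  have hcard : ∀ b : Fin N → Bool,
      hammingDist a b = (∑ k ∈ D, if a k ≠ b k then 1 else 0)
        + (∑ k ∈ Finset.univ \ D, if a k ≠ b k then 1 else 0) := by
    intro b
    rw [hammingDist, Finset.card_filter, ← Finset.sum_sdiff (Finset.subset_univ D), add_comm]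
  rw [hcard u, hcard v]
  have h1 : (∑ k ∈ Finset.univ \ D, if a k ≠ u k then 1 else 0)
      = (∑ k ∈ Finset.univ \ D, if a k ≠ v k then 1 else 0) := by
    refine Finset.sum_congr rfl fun k hk => ?_
    have : u k = v k := by
      by_contra h
      exact (Finset.mem_sdiff.mp hk).2 ((hD k).mpr h)
    rw [this]
  have h2 : (∑ k ∈ D, if a k ≠ v k then 1 else 0) = (∑ k ∈ D, if a k = u k then 1 else 0) := by
    refine Finset.sum_congr rfl fun k hk => ?_
    have huv : u k ≠ v k := (hD k).mp hk
    cases hak : a k <;> cases huk : u k <;> cases hvk : v k <;> simp_all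
  have h3 : (∑ k ∈ D, if a k ≠ u k then 1 else 0) = (∑ k ∈ D, if a k = u k then 0 else 1) := by
    refine Finset.sum_congr rfl fun k hk => ?_
    by_cases h : a k = u k <;> simp [h]
  rw [h1, h2, h3]
  ring

lemma chernoff_count {Ω : Type*} [MeasurableSpace Ω] (μ : Measure Ω) [IsProbabilityMeasure μ]
    {N : ℕ} (V : Ω → Fin N → Bool) (hmeas : ∀ k, Measurable (fun ω => V ω k))
    (hindep : iIndepFun (fun k ω => V ω k) μ)
    (c : Fin N → Bool) (q : ℝ) (hq : 1 / 2 < q) (hq1 : q ≤ 1)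
    (hmatch : ∀ k, (μ {ω | V ω k = c k}).toReal = q) (D : Finset (Fin N)) :
    (μ {ω | 2 * (D.filter fun k => V ω k = c k).card ≤ D.card}).toReal
      ≤ Real.exp (-((2 * q - 1) ^ 2 * (D.card : ℝ)) / 8) := by
  classical
  set ε : ℝ := q - 1 / 2 with hε
  have hε0 : 0 < ε := by rw [hε]; linarith
  set X : Fin N → Ω → ℝ := fun k ω => if V ω k = c k then 1 else 0 with hX
  have hE : ∀ k, MeasurableSet {ω | V ω k = c k} := fun k =>
    (hmeas k) (measurableSet_singleton (c k))
  have hXmeas : ∀ k, Measurable (X k) := fun k =>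
    Measurable.ite (hE k) measurable_const measurable_const
  have hXindep : iIndepFun X μ :=
    hindep.comp (fun k b => if b = c k then (1:ℝ) else 0)
      (fun k => measurable_from_top)
  have hrepr : ∀ (k : Fin N) (t : ℝ), (fun ω => Real.exp (t * X k ω)) =
      fun ω => Set.indicator {ω | V ω k = c k} (fun _ => Real.exp t - 1) ω + 1 := by
    intro k t
    funext ω
    by_cases h : V ω k = c k
    · simp [hX, h, Set.indicator_of_mem, Set.mem_setOf_eq]
    · simp [hX, h, Set.indicator_of_notMem, Set.mem_setOf_eq]
  have hint : ∀ (k : Fin N) (t : ℝ), Integrable (fun ω => Real.exp (t * X k ω)) μ := by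
    intro k t
    rw [hrepr k t]
    exact ((integrable_const (Real.exp t - 1)).indicator (hE k)).add (integrable_const 1)
  have hmgf_eq : ∀ (k : Fin N) (t : ℝ), mgf (X k) μ t = q * (Real.exp t - 1) + 1 := by
    intro k t
    have : mgf (X k) μ t = ∫ ω, Real.exp (t * X k ω) ∂μ := rfl
    rw [this, hrepr k t,
      integral_add ((integrable_const (Real.exp t - 1)).indicator (hE k)) (integrable_const 1),
      integral_indicator_const _ (hE k), integral_const]
    have hq' : μ.real {ω | V ω k = c k} = q := hmatch k
    simp [hq', mul_comm]
  have hmgf_le : ∀ k : Fin N, mgf (X k) μ (-ε) ≤ Real.exp (q * (-ε + ε ^ 2 / 2)) := by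
    intro k
    rw [hmgf_eq k (-ε)]
    have h1 : Real.exp (-ε) ≤ 1 - ε + ε ^ 2 / 2 := aux_exp_neg_le hε0.le
    have h2 : q * (Real.exp (-ε) - 1) + 1 ≤ q * (-ε + ε ^ 2 / 2) + 1 := by nlinarith
    refine h2.trans ?_
    linarith [Real.add_one_le_exp (q * (-ε + ε ^ 2 / 2))]
  -- the sum
  have hsum_int : Integrable (fun ω => Real.exp ((-ε) * (∑ k ∈ D, X k) ω)) μ :=
    hXindep.integrable_exp_mul_sum hXmeas (fun k _ => hint k (-ε))
  have hset : {ω | 2 * (D.filter fun k => V ω k = c k).card ≤ D.card}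
      = {ω | (∑ k ∈ D, X k) ω ≤ (D.card : ℝ) / 2} := by
    ext ω
    have hsum : (∑ k ∈ D, X k) ω = ((D.filter fun k => V ω k = c k).card : ℝ) := by
      rw [Finset.sum_apply]
      simp [hX]
    simp only [Set.mem_setOf_eq, hsum]
    rw [le_div_iff₀ (by norm_num : (0:ℝ) < 2)]
    constructor
    · intro h
      exact_mod_cast by omega
    · intro h
      have : ((D.filter fun k => V ω k = c k).card * 2 : ℕ) ≤ (D.card : ℕ) := by exact_mod_cast h
      omega
  rw [hset]
  have hcher := measure_le_le_exp_mul_mgf (μ := μ) (X := ∑ k ∈ D, X k) (t := -ε)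
    ((D.card : ℝ) / 2) (by linarith) hsum_int
  refine hcher.trans ?_
  have hmgfsum : mgf (∑ k ∈ D, X k) μ (-ε) = ∏ k ∈ D, mgf (X k) μ (-ε) :=
    hXindep.mgf_sum hXmeas D
  have hprod : ∏ k ∈ D, mgf (X k) μ (-ε) ≤ Real.exp ((D.card : ℝ) * (q * (-ε + ε ^ 2 / 2))) := by
    calc ∏ k ∈ D, mgf (X k) μ (-ε) ≤ ∏ k ∈ D, Real.exp (q * (-ε + ε ^ 2 / 2)) :=
          Finset.prod_le_prod (fun k _ => mgf_nonneg) (fun k _ => hmgf_le k)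
      _ = Real.exp ((D.card : ℝ) * (q * (-ε + ε ^ 2 / 2))) := by
          rw [Finset.prod_const, ← Real.exp_nat_mul]
  calc Real.exp (-(-ε) * ((D.card : ℝ) / 2)) * mgf (∑ k ∈ D, X k) μ (-ε)
      ≤ Real.exp (-(-ε) * ((D.card : ℝ) / 2)) * Real.exp ((D.card : ℝ) * (q * (-ε + ε ^ 2 / 2))) := by
        rw [hmgfsum]
        exact mul_le_mul_of_nonneg_left hprod (Real.exp_pos _).le
    _ = Real.exp (-(-ε) * ((D.card : ℝ) / 2) + (D.card : ℝ) * (q * (-ε + ε ^ 2 / 2))) := by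
        rw [← Real.exp_add]
    _ ≤ Real.exp (-((2 * q - 1) ^ 2 * (D.card : ℝ)) / 8) := by
        rw [Real.exp_le_exp]
        have hn : (0:ℝ) ≤ (D.card : ℝ) := Nat.cast_nonneg _
        rw [hε]
        nlinarith [mul_nonneg hn (mul_nonneg (sq_nonneg (q - 1/2)) (sub_nonneg.mpr hq1))]

lemma aux_union {Ω : Type*} [MeasurableSpace Ω] (μP : Measure Ω) [IsProbabilityMeasure μP]
    {N M : ℕ} (V : Ω → Fin N → Bool) (hmeas : ∀ k, Measurable (fun ω => V ω k))
    (hindep : iIndepFun (fun k ω => V ω k) μP)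
    (c : Fin N → Bool) (q : ℝ) (hq : 1 / 2 < q) (hq1 : q ≤ 1)
    (hmatch : ∀ k, (μP {ω | V ω k = c k}).toReal = q)
    (D : Fin M → Finset (Fin N)) (Γmin : ℕ) (hΓ : ∀ j, Γmin ≤ (D j).card)
    (P : Ω → Fin M → Prop)
    (hiff : ∀ ω j, P ω j ↔ (D j).card < 2 * ((D j).filter fun k => V ω k = c k).card) :
    max 0 (1 - 2 * M * Real.exp (-((2 * q - 1) ^ 2 * (Γmin : ℝ)) / 8))
      ≤ (μP {ω | ∀ j, P ω j}).toReal := by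
  classical
  set E : ℝ := Real.exp (-((2 * q - 1) ^ 2 * (Γmin : ℝ)) / 8) with hE
  set bad : Fin M → Set Ω :=
    fun j => {ω | 2 * ((D j).filter fun k => V ω k = c k).card ≤ (D j).card} with hbad
  have hcount_meas : ∀ j, Measurable (fun ω => ((D j).filter fun k => V ω k = c k).card) := by
    intro j
    have : (fun ω => ((D j).filter fun k => V ω k = c k).card)
        = fun ω => ∑ k ∈ D j, if V ω k = c k then 1 else 0 := by
      funext ω; rw [Finset.card_filter]
    rw [this]
    exact Finset.measurable_sum _ (fun k _ =>
      Measurable.ite ((hmeas k) (measurableSet_singleton (c k))) measurable_const measurable_const)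
  have hbad_meas : ∀ j, MeasurableSet (bad j) := by
    intro j
    exact measurableSet_le (measurable_const.mul (hcount_meas j)) measurable_const
  have hGeq : {ω | ∀ j, P ω j} = ⋂ j, (bad j)ᶜ := by
    ext ω
    simp only [Set.mem_setOf_eq, Set.mem_iInter, Set.mem_compl_iff, hbad, not_le]
    exact forall_congr' fun j => hiff ω j
  have hGmeas : MeasurableSet {ω | ∀ j, P ω j} := by
    rw [hGeq]; exact MeasurableSet.iInter fun j => (hbad_meas j).compl
  -- union bound
  have hunion : (μP (⋃ j, bad j)).toReal ≤ M * E := by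
    have h1 : μP (⋃ j, bad j) ≤ ∑ j, μP (bad j) := by
      simpa [tsum_fintype] using measure_iUnion_le bad
    have h2 : (μP (⋃ j, bad j)).toReal ≤ (∑ j, μP (bad j)).toReal :=
      ENNReal.toReal_mono (ENNReal.sum_ne_top.mpr fun j _ => measure_ne_top μP _) h1
    rw [ENNReal.toReal_sum (fun j _ => measure_ne_top μP _)] at h2
    refine h2.trans ?_
    have h3 : ∀ j, (μP (bad j)).toReal ≤ E := by
      intro j
      refine (chernoff_count μP V hmeas hindep c q hq hq1 hmatch (D j)).trans ?_
      rw [hE, Real.exp_le_exp]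
      have h4 : (Γmin : ℝ) ≤ ((D j).card : ℝ) := Nat.cast_le.mpr (hΓ j)
      have h5 : (0:ℝ) ≤ (2 * q - 1) ^ 2 := sq_nonneg _
      nlinarith
    calc ∑ j, (μP (bad j)).toReal ≤ ∑ _j : Fin M, E := Finset.sum_le_sum fun j _ => h3 j
      _ = M * E := by rw [Finset.sum_const, Finset.card_univ, Fintype.card_fin, nsmul_eq_mul]
  have hcompl : (μP {ω | ∀ j, P ω j}).toReal + (μP (⋃ j, bad j)).toReal = 1 := by
    have h6 : {ω | ∀ j, P ω j}ᶜ = ⋃ j, bad j := by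
      rw [hGeq, Set.compl_iInter]; simp
    have h7 := measure_add_measure_compl (μ := μP) hGmeas
    rw [h6, measure_univ] at h7
    have := congrArg ENNReal.toReal h7
    rwa [ENNReal.toReal_add (measure_ne_top _ _) (measure_ne_top _ _), ENNReal.toReal_one] at this
  have hEpos : 0 < E := Real.exp_pos _
  apply max_le ENNReal.toReal_nonneg
  have hME : (0:ℝ) ≤ (M:ℝ) * E := mul_nonneg (Nat.cast_nonneg M) hEpos.le
  linarith

/-- Corollary 2 of the paper (Top-K inferability probability bound): with `p ≠ 1/2`,
the probability that the true user `u` beats every one of the `M` competitors `w j`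
(strictly smaller Hamming distance to `V` when `p > 1/2`, strictly larger when
`p < 1/2`) is at least `max{0, 1 - 2M exp(-(1-2p)² Γ_min / 8)}`, where `Γ_min` is the
minimum Hamming distance from `u` to the competitors. -/
theorem stmt8 {Ω : Type*} [MeasurableSpace Ω] (μP : Measure Ω) [IsProbabilityMeasure μP]
    (N M : ℕ) (hM : 1 ≤ M) (u : Fin N → Bool) (w : Fin M → Fin N → Bool)
    (p : ℝ) (hp : p ≠ 1 / 2) (hp0 : 0 ≤ p) (hp1 : p ≤ 1)
    (V : Ω → Fin N → Bool)
    (hmeas : ∀ k, Measurable (fun ω => V ω k))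
    (hindep : iIndepFun (fun k ω => V ω k) μP)
    (hmatch : ∀ k, (μP {ω | V ω k = u k}).toReal = p)
    (Γmin : ℕ) (hΓmin : IsLeast (Set.range fun j => hammingDist u (w j)) Γmin) :
    max 0 (1 - 2 * M * Real.exp (-((1 - 2 * p) ^ 2 * (Γmin : ℝ)) / 8))
      ≤ (μP {ω | ∀ j, if 1 / 2 < p
            then hammingDist (V ω) u < hammingDist (V ω) (w j)
            else hammingDist (V ω) (w j) < hammingDist (V ω) u}).toReal := by
  classical
  have hΓle : ∀ j, Γmin ≤ hammingDist u (w j) := fun j => hΓmin.2 ⟨j, rfl⟩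
  set D : Fin M → Finset (Fin N) := fun j => Finset.univ.filter (fun k => u k ≠ w j k) with hD
  have hDmem : ∀ j k, k ∈ D j ↔ u k ≠ w j k := by intro j k; simp [hD]
  have hDcard : ∀ j, hammingDist u (w j) = (D j).card := by
    intro j
    rw [hammingDist, hD]
  have hΓD : ∀ j, Γmin ≤ (D j).card := fun j => (hDcard j) ▸ hΓle j
  -- counting identities
  have hsplit : ∀ (ω : Ω) (j : Fin M),
      (∑ k ∈ D j, if V ω k = u k then 1 else 0)
        + (∑ k ∈ D j, if V ω k = u k then 0 else 1) = (D j).card := by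
    intro ω j
    rw [← Finset.sum_add_distrib]
    have h1 : ∀ k ∈ D j,
        ((if V ω k = u k then 1 else 0) + if V ω k = u k then 0 else 1) = 1 := by
      intro k _; by_cases h : V ω k = u k <;> simp [h]
    rw [Finset.sum_congr rfl h1, Finset.sum_const, smul_eq_mul, mul_one]
  have hcardS : ∀ (ω : Ω) (j : Fin M),
      ((D j).filter fun k => V ω k = u k).card
        = ∑ k ∈ D j, if V ω k = u k then 1 else 0 := by
    intro ω j; rw [Finset.card_filter]
  have hcardT : ∀ (ω : Ω) (j : Fin M),
      ((D j).filter fun k => V ω k = !(u k)).card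
        = ∑ k ∈ D j, if V ω k = u k then 0 else 1 := by
    intro ω j
    rw [Finset.card_filter]
    refine Finset.sum_congr rfl fun k _ => ?_
    cases hv : V ω k <;> cases hu : u k <;> simp
  rcases lt_or_gt_of_ne hp with hlt | hgt
  · -- p < 1/2 case
    have hnp : ¬ (1 / 2 < p) := not_lt.mpr hlt.le
    simp only [if_neg hnp]
    have h2q : (1 - 2 * p) ^ 2 = (2 * (1 - p) - 1) ^ 2 := by ring
    rw [h2q]
    have hmatch' : ∀ k, (μP {ω | V ω k = !(u k)}).toReal = 1 - p := by
      intro k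
      have hset : {ω | V ω k = !(u k)} = {ω | V ω k = u k}ᶜ := by
        ext ω; simp [Bool.eq_not]
      have hE : MeasurableSet {ω | V ω k = u k} := (hmeas k) (measurableSet_singleton (u k))
      rw [hset, measure_compl hE (measure_ne_top _ _), measure_univ,
        ENNReal.toReal_sub_of_le prob_le_one ENNReal.one_ne_top, ENNReal.toReal_one, hmatch k]
    refine aux_union μP V hmeas hindep (fun k => !(u k)) (1 - p) (by linarith) (by linarith)
      hmatch' D Γmin hΓD _ ?_
    intro ω j
    have hid := ham_ident (V ω) u (w j) (D j) (hDmem j)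
    have h1 := hsplit ω j
    have h2 := hcardT ω j
    beta_reduce
    constructor
    · intro h; omega
    · intro h; omega
  · -- p > 1/2 case
    have hyp : (1 / 2 : ℝ) < p := hgt
    simp only [if_pos hyp]
    have h2q : (1 - 2 * p) ^ 2 = (2 * p - 1) ^ 2 := by ring
    rw [h2q]
    refine aux_union μP V hmeas hindep u p hyp hp1 hmatch D Γmin hΓD _ ?_
    intro ω j
    have hid := ham_ident (V ω) u (w j) (D j) (hDmem j)
    have h1 := hsplit ω j
    have h2 := hcardS ω j
    constructor
    · intro h; omega
    · intro h; omega
end
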